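/- Let ν be a partition and let k and n be positive integers with k ≤ n. Then the number of set-valued tableaux of shape ν∗(k) whose reverse reading word is a lattice word with content ρ_n = (n, n−1, …, 1) equals the number of set-valued tableaux of shape ν∗(1^k) whose reverse reading word is a lattice word with content ρ_n; that is, c^{ρ_n}_{(k)ν} = c^{ρ_n}_{(1^k)ν}. -/

import Mathlib

open Finset

namespace Stembridge

/-- The staircase partition `ρ_n = (n, n-1, …, 1)` as a Young diagram
(cells `(i, j)` with `i + j < n`, matrix coordinates, 0-indexed). -/
def staircase (n : ℕ) : YoungDiagram where
  cells := (Finset.range n ×ˢ Finset.range n).filter fun c => c.1 + c.2 < n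
  isLowerSet := by
    rintro ⟨i₁, j₁⟩ ⟨i₂, j₂⟩ hle hmem
    obtain ⟨hi, hj⟩ := hle
    simp only [Finset.mem_coe, Finset.mem_filter, Finset.mem_product, Finset.mem_range] at hmem ⊢
    omega

/-- The one-row partition `(k)` as a Young diagram. -/
def rowShape (k : ℕ) : YoungDiagram where
  cells := ({0} : Finset ℕ) ×ˢ Finset.range k
  isLowerSet := by
    rintro ⟨i₁, j₁⟩ ⟨i₂, j₂⟩ hle hmem
    obtain ⟨hi, hj⟩ := hle
    simp only [Finset.mem_coe, Finset.mem_product, Finset.mem_singleton, Finset.mem_range] at hmem ⊢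
    omega

/-- The one-column partition `(1^k)` as a Young diagram. -/
def colShape (k : ℕ) : YoungDiagram where
  cells := Finset.range k ×ˢ ({0} : Finset ℕ)
  isLowerSet := by
    rintro ⟨i₁, j₁⟩ ⟨i₂, j₂⟩ hle hmem
    obtain ⟨hi, hj⟩ := hle
    simp only [Finset.mem_coe, Finset.mem_product, Finset.mem_singleton, Finset.mem_range] at hmem ⊢
    omega

/-- The cells of the skew diagram `λ/μ`. -/
def skewCells (μ lam : YoungDiagram) : Finset (ℕ × ℕ) := lam.cells \ μ.cells

/-- A reverse plane partition on a finite shape of cells: a filling of the cells with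
positive integers which weakly increases along rows (left to right) and down columns.
Entries outside the shape are `0`. -/
structure RPP (shape : Finset (ℕ × ℕ)) where
  entry : ℕ × ℕ → ℕ
  pos : ∀ c ∈ shape, 0 < entry c
  zero_off : ∀ c, c ∉ shape → entry c = 0
  row_le : ∀ i j, (i, j) ∈ shape → (i, j + 1) ∈ shape → entry (i, j) ≤ entry (i, j + 1)
  col_le : ∀ i j, (i, j) ∈ shape → (i + 1, j) ∈ shape → entry (i, j) ≤ entry (i + 1, j)

/-- The weight of a reverse plane partition: `weight P i` is the number of columns of the
shape containing an entry equal to `i`. -/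
def RPP.weight {shape : Finset (ℕ × ℕ)} (P : RPP shape) (i : ℕ) : ℕ :=
  ((shape.filter fun c => P.entry c = i).image Prod.snd).card

/-- A set-valued tableau on a finite shape of cells: a filling of the cells by finite
nonempty sets of positive integers such that `max(left) ≤ min(right)` for horizontally
adjacent cells and `max(upper) < min(lower)` for vertically adjacent cells.
Cells outside the shape carry `∅`. -/
structure SVT (shape : Finset (ℕ × ℕ)) where
  entry : ℕ × ℕ → Finset ℕ
  nonempty : ∀ c ∈ shape, (entry c).Nonempty
  pos : ∀ c ∈ shape, ∀ x ∈ entry c, 0 < x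
  empty_off : ∀ c, c ∉ shape → entry c = ∅
  row_le : ∀ i j, (i, j) ∈ shape → (i, j + 1) ∈ shape →
    ∀ a ∈ entry (i, j), ∀ b ∈ entry (i, j + 1), a ≤ b
  col_lt : ∀ i j, (i, j) ∈ shape → (i + 1, j) ∈ shape →
    ∀ a ∈ entry (i, j), ∀ b ∈ entry (i + 1, j), a < b

/-- The content of a set-valued tableau: `content T i` is the number of cells whose
set contains `i`. -/
def SVT.content {shape : Finset (ℕ × ℕ)} (T : SVT shape) (i : ℕ) : ℕ :=
  (shape.filter fun c => i ∈ T.entry c).card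

/-- The reverse reading word of a set-valued tableau: read the columns from rightmost to
leftmost, each column from top to bottom, the elements within a cell in decreasing order. -/
def SVT.word {shape : Finset (ℕ × ℕ)} (T : SVT shape) : List ℕ :=
  ((List.range (shape.sup Prod.snd + 1)).reverse).flatMap fun j =>
    (List.range (shape.sup Prod.fst + 1)).flatMap fun i =>
      ((T.entry (i, j)).sort (· ≤ ·)).reverse

/-- A word is a lattice word if in every prefix, for every `a ≥ 1`, the number of
occurrences of `a+1` is at most the number of occurrences of `a` (equivalently, the `i`-th
occurrence of `a+1` comes after the `i`-th occurrence of `a`). -/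
def IsLatticeWord (w : List ℕ) : Prop :=
  ∀ t a, 1 ≤ a → (w.take t).count (a + 1) ≤ (w.take t).count a

/-- The content of the staircase partition `ρ_n` as a function: `a ↦ n + 1 - a`
(so `a ↦ 0` for `a > n`), for `a ≥ 1`. -/
def staircaseContent (n : ℕ) : ℕ → ℕ := fun a => n + 1 - a

/-- A semistandard Young tableau on a finite shape of cells: a filling with positive
integers weakly increasing along rows and strictly increasing down columns.
Entries outside the shape are `0`. -/
structure SSYT (shape : Finset (ℕ × ℕ)) where
  entry : ℕ × ℕ → ℕ
  pos : ∀ c ∈ shape, 0 < entry c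
  zero_off : ∀ c, c ∉ shape → entry c = 0
  row_le : ∀ i j, (i, j) ∈ shape → (i, j + 1) ∈ shape → entry (i, j) ≤ entry (i, j + 1)
  col_lt : ∀ i j, (i, j) ∈ shape → (i + 1, j) ∈ shape → entry (i, j) < entry (i + 1, j)

/-- The type of a semistandard Young tableau: `type T i` is the number of entries equal
to `i`. -/
def SSYT.type {shape : Finset (ℕ × ℕ)} (T : SSYT shape) (i : ℕ) : ℕ :=
  (shape.filter fun c => T.entry c = i).card

/-- The cells of the skew shape `ν∗μ`: `μ` occupies the lower-left block and `ν` the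
upper-right block, the top-right corner of `μ` touching the bottom-left corner of `ν`. -/
def starCells (ν μ : YoungDiagram) : Finset (ℕ × ℕ) :=
  ν.cells.image (fun c => (c.1, c.2 + μ.rowLen 0)) ∪
    μ.cells.image (fun c => (c.1 + ν.colLen 0, c.2))

/-- The number of reverse plane partitions of shape `λ/μ` with weight `w` (with the
convention that this is `0` if `μ ⊄ λ`). -/
noncomputable def rppCount (lam μ : YoungDiagram) (w : ℕ →₀ ℕ) : ℕ :=
  if μ.cells ⊆ lam.cells then
    Nat.card {P : RPP (skewCells μ lam) // ∀ i, 1 ≤ i → P.weight i = w i}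
  else 0

/-- The number of set-valued tableaux of shape `λ/μ` with content `m` (with the
convention that this is `0` if `μ ⊄ λ`). -/
noncomputable def svtCount (lam μ : YoungDiagram) (m : ℕ →₀ ℕ) : ℕ :=
  if μ.cells ⊆ lam.cells then
    Nat.card {T : SVT (skewCells μ lam) // ∀ i, 1 ≤ i → T.content i = m i}
  else 0

/-- The number of semistandard Young tableaux of shape `λ/μ` of type `α` (with the
convention that this is `0` if `μ ⊄ λ`). -/
noncomputable def ssytCount (lam μ : YoungDiagram) (α : ℕ →₀ ℕ) : ℕ :=
  if μ.cells ⊆ lam.cells then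
    Nat.card {T : SSYT (skewCells μ lam) // ∀ i, 1 ≤ i → T.type i = α i}
  else 0

/-- The number of set-valued tableaux of a given shape whose reverse reading word is a
lattice word with content `c` (indexed from 1). -/
noncomputable def latticeCount (shape : Finset (ℕ × ℕ)) (c : ℕ → ℕ) : ℕ :=
  Nat.card {T : SVT shape // IsLatticeWord T.word ∧ ∀ a, 1 ≤ a → T.word.count a = c a}


/-! ### Auxiliary lemmas -/

section Aux

lemma sum_map_range (g : ℕ → ℕ) (k : ℕ) :
    ((List.range k).map g).sum = ∑ j ∈ Finset.range k, g j := rfl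

lemma flatMap_range_eq {α : Type*} (f : ℕ → List α) {N₁ N₂ : ℕ} (h : N₁ ≤ N₂)
    (hf : ∀ j, N₁ ≤ j → f j = []) :
    (List.range N₂).flatMap f = (List.range N₁).flatMap f := by
  induction N₂, h using Nat.le_induction with
  | base => rfl
  | succ m hm ih =>
    rw [List.range_succ, List.flatMap_append, ih]
    simp [hf m hm]

lemma flatMap_range_reverse_eq {α : Type*} (f : ℕ → List α) {N₁ N₂ : ℕ} (h : N₁ ≤ N₂)
    (hf : ∀ j, N₁ ≤ j → f j = []) :
    ((List.range N₂).reverse).flatMap f = ((List.range N₁).reverse).flatMap f := by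
  induction N₂, h using Nat.le_induction with
  | base => rfl
  | succ m hm ih =>
    rw [List.range_succ, List.reverse_append, List.flatMap_append, ih]
    simp [hf m hm]

lemma count_desc (s : Finset ℕ) (a : ℕ) :
    ((s.sort (· ≤ ·)).reverse).count a = if a ∈ s then 1 else 0 := by
  rw [List.count_reverse]
  split
  · next h =>
    have hmem : a ∈ s.sort (· ≤ ·) := (Finset.mem_sort _).mpr h
    have h1 : 1 ≤ (s.sort (· ≤ ·)).count a := List.one_le_count_iff.mpr hmem
    have h2 : (s.sort (· ≤ ·)).count a ≤ 1 :=
      List.nodup_iff_count_le_one.mp (s.sort_nodup _) a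
    omega
  · next h =>
    exact List.count_eq_zero.mpr (fun hc => h ((Finset.mem_sort _).mp hc))

lemma SVT.ext' {s : Finset (ℕ × ℕ)} {T₁ T₂ : SVT s} (h : T₁.entry = T₂.entry) : T₁ = T₂ := by
  cases T₁; cases T₂; cases h; rfl

lemma rowLen_eq_of (μ : YoungDiagram) (i m : ℕ) (h : ∀ j, (i, j) ∈ μ ↔ j < m) :
    μ.rowLen i = m := by
  have ha : ¬ (μ.rowLen i < m) := fun hlt => by
    have := YoungDiagram.mem_iff_lt_rowLen.mp ((h _).mpr hlt); omega
  have hb : ¬ (m < μ.rowLen i) := fun hlt => by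
    have := (h m).mp (YoungDiagram.mem_iff_lt_rowLen.mpr hlt); omega
  omega

lemma mem_rowShape_iff {k : ℕ} {c : ℕ × ℕ} : c ∈ rowShape k ↔ c.1 = 0 ∧ c.2 < k := by
  obtain ⟨i, j⟩ := c
  simp only [← YoungDiagram.mem_cells, rowShape, Finset.mem_product, Finset.mem_singleton,
    Finset.mem_range]

lemma mem_colShape_iff {k : ℕ} {c : ℕ × ℕ} : c ∈ colShape k ↔ c.1 < k ∧ c.2 = 0 := by
  obtain ⟨i, j⟩ := c
  simp only [← YoungDiagram.mem_cells, colShape, Finset.mem_product, Finset.mem_singleton,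
    Finset.mem_range]

lemma rowShape_rowLen (k : ℕ) : (rowShape k).rowLen 0 = k :=
  rowLen_eq_of _ _ _ (fun j => by simp [mem_rowShape_iff])

lemma colShape_rowLen {k : ℕ} (hk : 1 ≤ k) : (colShape k).rowLen 0 = 1 :=
  rowLen_eq_of _ _ _ (fun j => by
    simp only [mem_colShape_iff]
    constructor
    · rintro ⟨h1, h2⟩; omega
    · intro h; omega)

lemma nu_row_lt {ν : YoungDiagram} {c : ℕ × ℕ} (h : c ∈ ν) : c.1 < ν.colLen 0 := by
  rw [← YoungDiagram.mem_iff_lt_colLen (j := 0)]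
  exact ν.up_left_mem le_rfl (Nat.zero_le _) (by simpa using h)

lemma nu_col_lt {ν : YoungDiagram} {c : ℕ × ℕ} (h : c ∈ ν) : c.2 < ν.rowLen 0 := by
  rw [← YoungDiagram.mem_iff_lt_rowLen (i := 0)]
  exact ν.up_left_mem (Nat.zero_le _) le_rfl (by simpa using h)

lemma mem_rowCells_iff {ν : YoungDiagram} {k : ℕ} {c : ℕ × ℕ} :
    c ∈ starCells ν (rowShape k) ↔
      (k ≤ c.2 ∧ (c.1, c.2 - k) ∈ ν) ∨ (c.1 = ν.colLen 0 ∧ c.2 < k) := by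
  obtain ⟨i, j⟩ := c
  rw [starCells, rowShape_rowLen]
  simp only [Finset.mem_union, Finset.mem_image, YoungDiagram.mem_cells]
  constructor
  · rintro (⟨⟨a, b⟩, hab, heq⟩ | ⟨⟨a, b⟩, hab, heq⟩)
    · injection heq with h1 h2
      subst h1; subst h2
      exact Or.inl ⟨Nat.le_add_left _ _, by simpa using hab⟩
    · injection heq with h1 h2
      subst h1; subst h2
      have := mem_rowShape_iff.mp ((YoungDiagram.mem_cells _).mp hab)
      exact Or.inr ⟨by omega, this.2⟩
  · rintro (⟨hk2, hmem⟩ | ⟨h1, h2⟩)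
    · exact Or.inl ⟨(i, j - k), hmem, by simp <;> omega⟩
    · refine Or.inr ⟨(0, j), ?_, by simp <;> omega⟩
      exact (YoungDiagram.mem_cells _).mpr (mem_rowShape_iff.mpr ⟨rfl, h2⟩)

lemma mem_colCells_iff {ν : YoungDiagram} {k : ℕ} (hk : 1 ≤ k) {c : ℕ × ℕ} :
    c ∈ starCells ν (colShape k) ↔
      (1 ≤ c.2 ∧ (c.1, c.2 - 1) ∈ ν) ∨
        (ν.colLen 0 ≤ c.1 ∧ c.1 < ν.colLen 0 + k ∧ c.2 = 0) := by
  obtain ⟨i, j⟩ := c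
  rw [starCells, colShape_rowLen hk]
  simp only [Finset.mem_union, Finset.mem_image, YoungDiagram.mem_cells]
  constructor
  · rintro (⟨⟨a, b⟩, hab, heq⟩ | ⟨⟨a, b⟩, hab, heq⟩)
    · injection heq with h1 h2
      subst h1; subst h2
      exact Or.inl ⟨Nat.le_add_left _ _, by simpa using hab⟩
    · injection heq with h1 h2
      subst h1; subst h2
      have := mem_colShape_iff.mp ((YoungDiagram.mem_cells _).mp hab)
      exact Or.inr ⟨by omega, by omega, this.2⟩
  · rintro (⟨hk2, hmem⟩ | ⟨h1, h2, h3⟩)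
    · exact Or.inl ⟨(i, j - 1), hmem, by simp <;> omega⟩
    · refine Or.inr ⟨(i - ν.colLen 0, 0), ?_, by simp <;> omega⟩
      exact (YoungDiagram.mem_cells _).mpr (mem_colShape_iff.mpr ⟨by omega, rfl⟩)


lemma flatMap_congr' {α β : Type*} {l : List α} {f g : α → List β} (h : ∀ x ∈ l, f x = g x) :
    l.flatMap f = l.flatMap g := by
  induction l with
  | nil => rfl
  | cons a t ih =>
    simp only [List.flatMap_cons]
    rw [h a (by simp), ih fun x hx => h x (by simp [hx])]

lemma flatMap_range_last {α : Type*} (f : ℕ → List α) (r : ℕ) (hf : ∀ i, i < r → f i = []) :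
    (List.range (r + 1)).flatMap f = f r := by
  rw [List.range_succ, List.flatMap_append,
    List.flatMap_eq_nil_iff.mpr (fun i hi => hf i (List.mem_range.mp hi))]
  simp

/-- The reading word of an SVT over any grid containing the shape. -/
lemma word_grid {shape : Finset (ℕ × ℕ)} (T : SVT shape) {M N : ℕ} (hM : 1 ≤ M) (hN : 1 ≤ N)
    (hs : ∀ c ∈ shape, c.1 < M ∧ c.2 < N) :
    T.word = ((List.range N).reverse).flatMap fun j =>
      (List.range M).flatMap fun i => ((T.entry (i, j)).sort (· ≤ ·)).reverse := by
  have hent : ∀ i j, (shape.sup Prod.fst < i ∨ shape.sup Prod.snd < j) →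
      T.entry (i, j) = ∅ := by
    intro i j hij
    refine T.empty_off _ fun hmem => ?_
    rcases hij with h | h
    · exact absurd (Finset.le_sup (f := Prod.fst) hmem) (by omega)
    · exact absurd (Finset.le_sup (f := Prod.snd) hmem) (by omega)
  have hb1 : shape.sup Prod.fst < M :=
    (Finset.sup_lt_iff (show (⊥ : ℕ) < M from hM)).mpr fun c hc => (hs c hc).1
  have hb2 : shape.sup Prod.snd < N :=
    (Finset.sup_lt_iff (show (⊥ : ℕ) < N from hN)).mpr fun c hc => (hs c hc).2
  rw [SVT.word]
  symm
  rw [flatMap_range_reverse_eq _ (show shape.sup Prod.snd + 1 ≤ N by omega)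
    (fun j hj => List.flatMap_eq_nil_iff.mpr fun i _ => by
      rw [hent i j (Or.inr (by omega))]; simp)]
  exact flatMap_congr' fun j _ =>
    flatMap_range_eq _ (show shape.sup Prod.fst + 1 ≤ M by omega)
      (fun i hi => by rw [hent i j (Or.inl (by omega))]; simp)

/-- Decreasing list of a finset. -/
def descL (s : Finset ℕ) : List ℕ := (s.sort (· ≤ ·)).reverse

section Decompose

variable (ν : YoungDiagram) (k : ℕ)

/-- The part of the reading word of an SVT of shape `ν∗(k)` coming from `ν`. -/
def nuWordRow (T : SVT (starCells ν (rowShape k))) : List ℕ :=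
  ((List.range (ν.rowLen 0)).reverse).flatMap fun j =>
    (List.range (ν.colLen 0)).flatMap fun i => descL (T.entry (i, j + k))

/-- The part of the reading word of an SVT of shape `ν∗(k)` coming from the row `(k)`. -/
def stripWordRow (T : SVT (starCells ν (rowShape k))) : List ℕ :=
  ((List.range k).reverse).flatMap fun j => descL (T.entry (ν.colLen 0, j))

/-- The part of the reading word of an SVT of shape `ν∗(1^k)` coming from `ν`. -/
def nuWordCol (T : SVT (starCells ν (colShape k))) : List ℕ :=
  ((List.range (ν.rowLen 0)).reverse).flatMap fun j =>
    (List.range (ν.colLen 0)).flatMap fun i => descL (T.entry (i, j + 1))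

/-- The part of the reading word of an SVT of shape `ν∗(1^k)` coming from the column. -/
def stripWordCol (T : SVT (starCells ν (colShape k))) : List ℕ :=
  (List.range k).flatMap fun i => descL (T.entry (ν.colLen 0 + i, 0))

lemma word_row (hk : 1 ≤ k) (T : SVT (starCells ν (rowShape k))) :
    T.word = nuWordRow ν k T ++ stripWordRow ν k T := by
  have hoff : ∀ i j, ν.colLen 0 ≤ i → k ≤ j → T.entry (i, j) = ∅ := by
    intro i j hi hj
    refine T.empty_off _ fun hmem => ?_
    rcases mem_rowCells_iff.mp hmem with ⟨h1, h2⟩ | ⟨h1, h2⟩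
    · exact absurd (nu_row_lt h2) (by omega)
    · omega
  have hoff2 : ∀ i j, i < ν.colLen 0 → j < k → T.entry (i, j) = ∅ := by
    intro i j hi hj
    refine T.empty_off _ fun hmem => ?_
    rcases mem_rowCells_iff.mp hmem with ⟨h1, h2⟩ | ⟨h1, h2⟩ <;> omega
  rw [word_grid T (M := ν.colLen 0 + 1) (N := k + ν.rowLen 0) (by omega) (by omega) ?bnd]
  case bnd =>
    intro c hc
    rcases mem_rowCells_iff.mp hc with ⟨h1, h2⟩ | ⟨h1, h2⟩
    · have := nu_row_lt h2
      have := nu_col_lt h2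
      omega
    · omega
  rw [List.range_add (n := k) (m := ν.rowLen 0), List.reverse_append, List.flatMap_append, ← List.map_reverse,
    List.flatMap_map]
  congr 1
  · refine flatMap_congr' fun j hj => ?_
    rw [flatMap_range_eq _ (Nat.le_succ _) fun i hi => ?_]
    · exact flatMap_congr' fun i _ => by rw [descL, Nat.add_comm k j]
    · have : T.entry (i, k + j) = ∅ := hoff i (k + j) (by omega) (by omega)
      simp [this]
  · refine flatMap_congr' fun j hj => ?_
    have hjk : j < k := by
      have := List.mem_range.mp (List.mem_reverse.mp hj)
      omega
    rw [flatMap_range_last _ _ fun i hi => ?_]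
    · rfl
    · simp [hoff2 i j hi hjk]

lemma word_col (hk : 1 ≤ k) (T : SVT (starCells ν (colShape k))) :
    T.word = nuWordCol ν k T ++ stripWordCol ν k T := by
  have hoff : ∀ i j, ν.colLen 0 ≤ i → 1 ≤ j → T.entry (i, j) = ∅ := by
    intro i j hi hj
    refine T.empty_off _ fun hmem => ?_
    rcases (mem_colCells_iff hk).mp hmem with ⟨h1, h2⟩ | ⟨h1, h2, h3⟩
    · exact absurd (nu_row_lt h2) (by omega)
    · omega
  have hoff2 : ∀ i, i < ν.colLen 0 → T.entry (i, 0) = ∅ := by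
    intro i hi
    refine T.empty_off _ fun hmem => ?_
    rcases (mem_colCells_iff hk).mp hmem with ⟨h1, h2⟩ | ⟨h1, h2, h3⟩ <;> omega
  rw [word_grid T (M := ν.colLen 0 + k) (N := 1 + ν.rowLen 0) (by omega) (by omega) ?bnd]
  case bnd =>
    intro c hc
    rcases (mem_colCells_iff hk).mp hc with ⟨h1, h2⟩ | ⟨h1, h2, h3⟩
    · have := nu_row_lt h2
      have := nu_col_lt h2
      omega
    · omega
  rw [List.range_add (n := 1) (m := ν.rowLen 0), List.reverse_append, List.flatMap_append, ← List.map_reverse,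
    List.flatMap_map]
  congr 1
  · refine flatMap_congr' fun j hj => ?_
    rw [flatMap_range_eq _ (show ν.colLen 0 ≤ ν.colLen 0 + k by omega) fun i hi => ?_]
    · exact flatMap_congr' fun i _ => by rw [descL, Nat.add_comm 1 j]
    · simp [hoff i (1 + j) (by omega) (by omega)]
  · have h1 : (List.range 1).reverse = [0] := by simp [List.range_succ]
    rw [h1, List.flatMap_cons, List.flatMap_nil, List.append_nil, List.range_add,
      List.flatMap_append, List.flatMap_map,
      List.flatMap_eq_nil_iff.mpr fun i hi => by
        rw [hoff2 i (List.mem_range.mp hi)]; simp]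
    rfl

end Decompose



section Strip

variable {ν : YoungDiagram} {k n : ℕ}

lemma mem_strip_row {j : ℕ} (hj : j < k) :
    (ν.colLen 0, j) ∈ starCells ν (rowShape k) :=
  mem_rowCells_iff.mpr (Or.inr ⟨rfl, hj⟩)

lemma mem_strip_col (hk : 1 ≤ k) {i : ℕ} (hi : i < k) :
    (ν.colLen 0 + i, 0) ∈ starCells ν (colShape k) :=
  (mem_colCells_iff hk).mpr (Or.inr ⟨by omega, by omega, rfl⟩)

lemma mem_descL {s : Finset ℕ} {x : ℕ} : x ∈ descL s ↔ x ∈ s := by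
  simp [descL, Finset.mem_sort]

lemma count_stripWordRow (T : SVT (starCells ν (rowShape k))) (a : ℕ) :
    (stripWordRow ν k T).count a =
      ∑ j ∈ Finset.range k, if a ∈ T.entry (ν.colLen 0, j) then 1 else 0 := by
  rw [stripWordRow, List.count_flatMap, List.map_reverse, List.sum_reverse, sum_map_range]
  exact Finset.sum_congr rfl fun j _ => count_desc _ _

lemma count_stripWordCol (T : SVT (starCells ν (colShape k))) (a : ℕ) :
    (stripWordCol ν k T).count a =
      ∑ i ∈ Finset.range k, if a ∈ T.entry (ν.colLen 0 + i, 0) then 1 else 0 := by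
  rw [stripWordCol, List.count_flatMap, sum_map_range]
  exact Finset.sum_congr rfl fun i _ => count_desc _ _

lemma strip_le_row (T : SVT (starCells ν (rowShape k))) :
    ∀ j₁ j₂, j₁ < j₂ → j₂ < k →
      ∀ x ∈ T.entry (ν.colLen 0, j₁), ∀ y ∈ T.entry (ν.colLen 0, j₂), x ≤ y := by
  intro j₁ j₂ h12
  induction j₂, h12 using Nat.le_induction with
  | base =>
    intro h2k x hx y hy
    exact T.row_le _ _ (mem_strip_row (by omega)) (mem_strip_row h2k) x hx y hy
  | succ m hm ih =>
    intro h2k x hx y hy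
    obtain ⟨z, hz⟩ := T.nonempty _ (mem_strip_row (show m < k by omega))
    exact le_trans (ih (by omega) x hx z hz)
      (T.row_le _ _ (mem_strip_row (by omega)) (mem_strip_row h2k) z hz y hy)

lemma strip_lt_col (hk : 1 ≤ k) (T : SVT (starCells ν (colShape k))) :
    ∀ i₁ i₂, i₁ < i₂ → i₂ < k →
      ∀ x ∈ T.entry (ν.colLen 0 + i₁, 0), ∀ y ∈ T.entry (ν.colLen 0 + i₂, 0), x < y := by
  intro i₁ i₂ h12
  induction i₂, h12 using Nat.le_induction with
  | base =>
    intro h2k x hx y hy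
    have := T.col_lt (ν.colLen 0 + i₁) 0 (mem_strip_col hk (by omega))
      (by rw [show ν.colLen 0 + i₁ + 1 = ν.colLen 0 + (i₁ + 1) by omega]
          exact mem_strip_col hk h2k) x hx
    apply this
    rw [show ν.colLen 0 + i₁ + 1 = ν.colLen 0 + (i₁ + 1) by omega]
    exact hy
  | succ m hm ih =>
    intro h2k x hx y hy
    obtain ⟨z, hz⟩ := T.nonempty _ (mem_strip_col hk (show m < k by omega))
    refine lt_trans (ih (by omega) x hx z hz) ?_
    have := T.col_lt (ν.colLen 0 + m) 0 (mem_strip_col hk (by omega))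
      (by rw [show ν.colLen 0 + m + 1 = ν.colLen 0 + (m + 1) by omega]
          exact mem_strip_col hk h2k) z hz
    apply this
    rw [show ν.colLen 0 + m + 1 = ν.colLen 0 + (m + 1) by omega]
    exact hy

lemma descL_pairwise (s : Finset ℕ) : (descL s).Pairwise (fun x y => y ≤ x) := by
  rw [descL, List.pairwise_reverse]
  exact s.pairwise_sort (· ≤ ·)

lemma stripWordRow_pairwise (T : SVT (starCells ν (rowShape k))) :
    (stripWordRow ν k T).Pairwise (fun x y => y ≤ x) := by
  rw [stripWordRow, List.flatMap_def, List.pairwise_flatten]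
  constructor
  · intro l' hl'
    obtain ⟨j, _, rfl⟩ := List.mem_map.mp hl'
    exact descL_pairwise _
  · rw [List.pairwise_map]
    have hrev : ((List.range k).reverse).Pairwise (fun a b => b < a) := by
      rw [List.pairwise_reverse]
      exact List.pairwise_lt_range
    refine hrev.imp_of_mem ?_
    intro j₁ j₂ hj₁ hj₂ hlt x hx y hy
    have hk1 : j₁ < k := List.mem_range.mp (List.mem_reverse.mp hj₁)
    exact strip_le_row T j₂ j₁ hlt hk1 y (mem_descL.mp hy) x (mem_descL.mp hx)

lemma dropWhile_le {v : List ℕ} {a : ℕ} (hpair : v.Pairwise (fun x y => y ≤ x)) :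
    ∀ x ∈ v.dropWhile (fun x => a < x), x ≤ a := by
  induction v with
  | nil => simp
  | cons c t ih =>
    by_cases hc : a < c
    · rw [List.dropWhile_cons_of_pos (by simpa using hc)]
      exact ih hpair.of_cons
    · rw [List.dropWhile_cons_of_neg (by simpa using hc)]
      intro x hx
      rcases List.mem_cons.mp hx with rfl | hx
      · omega
      · exact le_trans (List.rel_of_pairwise_cons hpair hx) (by omega)

lemma lattice_prefix {u v : List ℕ} (h : IsLatticeWord (u ++ v)) : IsLatticeWord u := by
  intro t a ha
  rcases le_or_gt t u.length with ht | ht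
  · rw [← List.take_append_of_le_length ht]
    exact h t a ha
  · rw [List.take_of_length_le (by omega)]
    have := h u.length a ha
    rwa [List.take_left] at this

/-- Key counting lemma: in a lattice word of content `ρ_n` of shape `ν∗(k)`,
every letter appears at most once in the strip row. -/
lemma stripRow_count_le_one (hk : 1 ≤ k) (T : SVT (starCells ν (rowShape k)))
    (hlat : IsLatticeWord T.word)
    (hcontent : ∀ a, 1 ≤ a → T.word.count a = staircaseContent n a) :
    ∀ a, 1 ≤ a → (stripWordRow ν k T).count a ≤ 1 := by
  intro a ha
  by_contra hge
  push_neg at hge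
  set u := nuWordRow ν k T with hu
  set v := stripWordRow ν k T with hv
  have hword : T.word = u ++ v := word_row ν k hk T
  have hcnt_a : u.count a + v.count a = n + 1 - a := by
    rw [← List.count_append, ← hword]
    exact (hcontent a ha).trans rfl
  have hcnt_a1 : u.count (a + 1) + v.count (a + 1) = n + 1 - (a + 1) := by
    rw [← List.count_append, ← hword]
    exact (hcontent (a + 1) (by omega)).trans rfl
  by_cases hcase : n + 1 - a < 2
  · omega
  set v₁ := v.takeWhile (fun x => a < x) with hv₁
  set v₂ := v.dropWhile (fun x => a < x) with hv₂
  have hsplit : v₁ ++ v₂ = v := List.takeWhile_append_dropWhile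
  have hmem1 : ∀ x ∈ v₁, a < x := fun x hx => by
    simpa using List.mem_takeWhile_imp hx
  have hmem2 : ∀ x ∈ v₂, x ≤ a := dropWhile_le (stripWordRow_pairwise T)
  have hc1 : v₁.count a = 0 := List.count_eq_zero.mpr fun hc => by
    have := hmem1 a hc; omega
  have hc2 : v₂.count (a + 1) = 0 := List.count_eq_zero.mpr fun hc => by
    have := hmem2 _ hc; omega
  have htake : (u ++ v).take (u.length + v₁.length) = u ++ v₁ := by
    rw [← hsplit, ← List.append_assoc,
      show u.length + v₁.length = (u ++ v₁).length by simp, List.take_left]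
  have hl := hlat (u.length + v₁.length) a ha
  rw [hword, htake, List.count_append, List.count_append] at hl
  have hv12 : v₁.count (a + 1) + v₂.count (a + 1) = v.count (a + 1) := by
    rw [← List.count_append, hsplit]
  omega

lemma stripRow_disjoint (hk : 1 ≤ k) (T : SVT (starCells ν (rowShape k)))
    (hlat : IsLatticeWord T.word)
    (hcontent : ∀ a, 1 ≤ a → T.word.count a = staircaseContent n a) :
    ∀ a j₁ j₂, j₁ < j₂ → j₂ < k → a ∈ T.entry (ν.colLen 0, j₁) →
      a ∈ T.entry (ν.colLen 0, j₂) → False := by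
  intro a j₁ j₂ h12 h2k h1 h2
  have ha : 1 ≤ a := T.pos _ (mem_strip_row (by omega)) a h1
  have hle := stripRow_count_le_one (n := n) hk T hlat hcontent a ha
  rw [count_stripWordRow] at hle
  have hsub : ({j₁, j₂} : Finset ℕ) ⊆ Finset.range k := by
    intro x hx
    rcases Finset.mem_insert.mp hx with rfl | hx
    · exact Finset.mem_range.mpr (by omega)
    · rw [Finset.mem_singleton] at hx
      subst hx
      exact Finset.mem_range.mpr h2k
  have h2le : (2 : ℕ) ≤ ∑ j ∈ Finset.range k,
      if a ∈ T.entry (ν.colLen 0, j) then 1 else 0 := by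
    calc (2 : ℕ) = ∑ j ∈ ({j₁, j₂} : Finset ℕ),
        if a ∈ T.entry (ν.colLen 0, j) then 1 else 0 := by
          rw [Finset.sum_pair (by omega : j₁ ≠ j₂), if_pos h1, if_pos h2]
      _ ≤ _ := Finset.sum_le_sum_of_subset hsub
  omega

lemma stripCol_count_le_one (hk : 1 ≤ k) (T : SVT (starCells ν (colShape k))) (a : ℕ) :
    (stripWordCol ν k T).count a ≤ 1 := by
  rw [count_stripWordCol]
  rw [Finset.sum_boole]
  rw [Nat.cast_id]
  apply Finset.card_le_one.mpr
  intro i hi j hj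
  simp only [Finset.mem_filter, Finset.mem_range] at hi hj
  by_contra hne
  rcases Nat.lt_or_ge i j with h | h
  · exact absurd (strip_lt_col hk T i j h hj.1 a hi.2 a hj.2) (lt_irrefl a)
  · have : j < i := by omega
    exact absurd (strip_lt_col hk T j i this hi.1 a hj.2 a hi.2) (lt_irrefl a)

/-- The key lattice-word transfer lemma. -/
lemma lattice_append_of {u v' : List ℕ} (hu : IsLatticeWord u)
    (h2 : ∀ a, 1 ≤ a → u.count a + v'.count a = n + 1 - a)
    (h3 : ∀ a, 1 ≤ a → v'.count a ≤ 1) :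
    IsLatticeWord (u ++ v') := by
  intro t a ha
  by_cases ht : t ≤ u.length
  · rw [List.take_append_of_le_length ht]
    exact hu t a ha
  · rw [show t = u.length + (t - u.length) by omega, List.take_length_add_append,
      List.count_append, List.count_append]
    have k1 : (v'.take (t - u.length)).count (a + 1) ≤ v'.count (a + 1) :=
      (List.take_sublist _ _).count_le _
    have k0 : (v'.take (t - u.length)).count a ≤ v'.count a :=
      (List.take_sublist _ _).count_le _
    have e1 := h2 a ha
    have e2 := h2 (a + 1) (by omega)
    have e3 := h3 a ha
    have e4 := h3 (a + 1) (by omega)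
    have hu' : u.count (a + 1) ≤ u.count a := by
      have := hu u.length a ha
      rwa [List.take_length] at this
    omega

end Strip



section Maps

variable {ν : YoungDiagram} {k n : ℕ}

/-- The entry function of the image tableau of shape `ν∗(1^k)`. -/
def phiEntry (ν : YoungDiagram) (k : ℕ) (T : SVT (starCells ν (rowShape k))) :
    ℕ × ℕ → Finset ℕ := fun c =>
  if c.2 = 0 then
    (if ν.colLen 0 ≤ c.1 then T.entry (ν.colLen 0, c.1 - ν.colLen 0) else ∅)
  else T.entry (c.1, c.2 + (k - 1))

/-- The entry function of the image tableau of shape `ν∗(k)`. -/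
def psiEntry (ν : YoungDiagram) (k : ℕ) (T : SVT (starCells ν (colShape k))) :
    ℕ × ℕ → Finset ℕ := fun c =>
  if c.2 < k then
    (if c.1 = ν.colLen 0 then T.entry (ν.colLen 0 + c.2, 0) else ∅)
  else T.entry (c.1, c.2 - (k - 1))

lemma mem_row_of_col (hk : 1 ≤ k) {c : ℕ × ℕ} (h : c ∈ starCells ν (colShape k))
    (hc2 : c.2 ≠ 0) : (c.1, c.2 + (k - 1)) ∈ starCells ν (rowShape k) := by
  rcases (mem_colCells_iff hk).mp h with ⟨h1, h2⟩ | ⟨_, _, h3⟩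
  · refine mem_rowCells_iff.mpr (Or.inl ⟨by omega, ?_⟩)
    have harith : c.2 + (k - 1) - k = c.2 - 1 := by omega
    simpa [harith] using h2
  · omega

lemma mem_col_of_row (hk : 1 ≤ k) {c : ℕ × ℕ} (h : c ∈ starCells ν (rowShape k))
    (hc2 : k ≤ c.2) : (c.1, c.2 - (k - 1)) ∈ starCells ν (colShape k) := by
  rcases mem_rowCells_iff.mp h with ⟨h1, h2⟩ | ⟨_, h3⟩
  · refine (mem_colCells_iff hk).mpr (Or.inl ⟨by omega, ?_⟩)
    have harith : c.2 - (k - 1) - 1 = c.2 - k := by omega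
    simpa [harith] using h2
  · omega

/-- The row-to-column map on set-valued tableaux. -/
def phiSVT (hk : 1 ≤ k) (T : SVT (starCells ν (rowShape k)))
    (hdisj : ∀ a j₁ j₂, j₁ < j₂ → j₂ < k → a ∈ T.entry (ν.colLen 0, j₁) →
      a ∈ T.entry (ν.colLen 0, j₂) → False) :
    SVT (starCells ν (colShape k)) where
  entry := phiEntry ν k T
  nonempty := by
    rintro ⟨i, j⟩ hc
    rcases (mem_colCells_iff hk).mp hc with ⟨h1, h2⟩ | ⟨h1, h2, h3⟩
    · rw [phiEntry, if_neg (by simp <;> omega)]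
      exact T.nonempty _ (mem_row_of_col hk hc (by simp <;> omega))
    · simp only at h3
      subst h3
      rw [phiEntry]
      simp only [if_pos rfl, if_pos h1]
      exact T.nonempty _ (mem_strip_row (by omega))
  pos := by
    rintro ⟨i, j⟩ hc
    rcases (mem_colCells_iff hk).mp hc with ⟨h1, h2⟩ | ⟨h1, h2, h3⟩
    · rw [phiEntry, if_neg (by simp <;> omega)]
      exact T.pos _ (mem_row_of_col hk hc (by simp <;> omega))
    · simp only at h3
      subst h3
      rw [phiEntry]
      simp only [if_pos rfl, if_pos h1]
      exact T.pos _ (mem_strip_row (by omega))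
  empty_off := by
    rintro ⟨i, j⟩ hc
    by_cases hj : j = 0
    · subst hj
      rw [phiEntry]
      simp only [if_pos rfl]
      by_cases hi : ν.colLen 0 ≤ i
      · rw [if_pos hi]
        refine T.empty_off _ fun hmem => ?_
        rcases mem_rowCells_iff.mp hmem with ⟨m1, m2⟩ | ⟨m1, m2⟩
        · exact absurd (nu_row_lt m2) (by simp <;> omega)
        · exact hc ((mem_colCells_iff hk).mpr (Or.inr ⟨hi, by simp at m2 ⊢; omega, rfl⟩))
      · simp [if_neg hi]
    · rw [phiEntry, if_neg (by simpa using hj)]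
      refine T.empty_off _ fun hmem => ?_
      rcases mem_rowCells_iff.mp hmem with ⟨m1, m2⟩ | ⟨m1, m2⟩
      · refine hc ((mem_colCells_iff hk).mpr (Or.inl ⟨by simp <;> omega, ?_⟩))
        have harith : j + (k - 1) - k = j - 1 := by simp at m1 ⊢; omega
        simpa [harith] using m2
      · simp at m1 m2; omega
  row_le := by
    intro i j h1 h2 a hx b hy
    by_cases hj : j = 0
    · subst hj
      exfalso
      rcases (mem_colCells_iff hk).mp h1 with ⟨m1, m2⟩ | ⟨m1, m2, m3⟩
      · simp at m1
      rcases (mem_colCells_iff hk).mp h2 with ⟨n1, n2⟩ | ⟨n1, n2, n3⟩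
      · have hlt := nu_row_lt n2
        rcases (mem_colCells_iff hk).mp h1 with ⟨p1, p2⟩ | ⟨p1, p2, p3⟩
        · simp at p1
        · simp at hlt p1
          omega
      · simp at n3
    · rw [phiEntry, if_neg (by simpa using hj)] at hx
      rw [phiEntry, if_neg (by simp)] at hy
      have harith : j + 1 + (k - 1) = (j + (k - 1)) + 1 := by omega
      rw [harith] at hy
      exact T.row_le i (j + (k - 1)) (mem_row_of_col hk h1 (by simpa using hj))
        (by have := mem_row_of_col hk h2 (by simp)
            simpa [harith] using this) a hx b hy
  col_lt := by
    intro i j h1 h2 a hx b hy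
    by_cases hj : j = 0
    · subst hj
      have hs1 : ν.colLen 0 ≤ i ∧ i < ν.colLen 0 + k := by
        rcases (mem_colCells_iff hk).mp h1 with ⟨m1, m2⟩ | ⟨m1, m2, m3⟩
        · simp at m1
        · exact ⟨m1, m2⟩
      have hs2 : i + 1 < ν.colLen 0 + k := by
        rcases (mem_colCells_iff hk).mp h2 with ⟨m1, m2⟩ | ⟨m1, m2, m3⟩
        · simp at m1
        · exact m2
      rw [phiEntry] at hx hy
      simp only [if_pos rfl] at hx hy
      rw [if_pos (show ν.colLen 0 ≤ i by omega)] at hx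
      rw [if_pos (show ν.colLen 0 ≤ i + 1 by omega)] at hy
      have harith : i + 1 - ν.colLen 0 = (i - ν.colLen 0) + 1 := by omega
      rw [harith] at hy
      have hle : a ≤ b := T.row_le (ν.colLen 0) (i - ν.colLen 0)
        (mem_strip_row (by omega)) (mem_strip_row (by omega)) a hx b hy
      rcases lt_or_eq_of_le hle with h | h
      · exact h
      · exact absurd hy (fun hy' => hdisj a (i - ν.colLen 0) (i - ν.colLen 0 + 1)
          (by omega) (by omega) hx (h ▸ hy'))
    · rw [phiEntry, if_neg (by simpa using hj)] at hx
      rw [phiEntry, if_neg (by simpa using hj)] at hy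
      exact T.col_lt i (j + (k - 1)) (mem_row_of_col hk h1 (by simpa using hj))
        (mem_row_of_col hk h2 (by simpa using hj)) a hx b hy

/-- The column-to-row map on set-valued tableaux. -/
def psiSVT (hk : 1 ≤ k) (T : SVT (starCells ν (colShape k))) :
    SVT (starCells ν (rowShape k)) where
  entry := psiEntry ν k T
  nonempty := by
    rintro ⟨i, j⟩ hc
    rcases mem_rowCells_iff.mp hc with ⟨h1, h2⟩ | ⟨h1, h2⟩
    · rw [psiEntry, if_neg (by simp <;> omega)]
      exact T.nonempty _ (mem_col_of_row hk hc (by simpa using h1))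
    · simp only at h1 h2
      rw [psiEntry, if_pos (by simpa using h2), if_pos (by simpa using h1)]
      exact T.nonempty _ (mem_strip_col hk h2)
  pos := by
    rintro ⟨i, j⟩ hc
    rcases mem_rowCells_iff.mp hc with ⟨h1, h2⟩ | ⟨h1, h2⟩
    · rw [psiEntry, if_neg (by simp <;> omega)]
      exact T.pos _ (mem_col_of_row hk hc (by simpa using h1))
    · simp only at h1 h2
      rw [psiEntry, if_pos (by simpa using h2), if_pos (by simpa using h1)]
      exact T.pos _ (mem_strip_col hk h2)
  empty_off := by
    rintro ⟨i, j⟩ hc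
    by_cases hj : j < k
    · rw [psiEntry, if_pos (by simpa using hj)]
      by_cases hi : i = ν.colLen 0
      · rw [if_pos (by simpa using hi)]
        refine T.empty_off _ fun hmem => ?_
        rcases (mem_colCells_iff hk).mp hmem with ⟨m1, m2⟩ | ⟨m1, m2, m3⟩
        · simp at m1
        · subst hi
          exact hc (mem_strip_row hj)
      · rw [if_neg (by simpa using hi)]
    · rw [psiEntry, if_neg (by simpa using hj)]
      refine T.empty_off _ fun hmem => ?_
      rcases (mem_colCells_iff hk).mp hmem with ⟨m1, m2⟩ | ⟨m1, m2, m3⟩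
      · refine hc (mem_rowCells_iff.mpr (Or.inl ⟨by simp <;> omega, ?_⟩))
        have harith : j - (k - 1) - 1 = j - k := by simp at m1 ⊢; omega
        have harith2 : j - k = j - (k - 1) - 1 := by simp at m1 ⊢; omega
        simp only
        rw [harith2]
        exact m2
      · simp at m3; omega
  row_le := by
    intro i j h1 h2 a hx b hy
    by_cases hj : j + 1 < k
    · have hi : i = ν.colLen 0 := by
        rcases mem_rowCells_iff.mp h1 with ⟨m1, m2⟩ | ⟨m1, m2⟩
        · simp at m1; omega
        · exact m1
      rw [psiEntry, if_pos (by simp <;> omega), if_pos (by simpa using hi)] at hx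
      rw [psiEntry, if_pos (by simpa using hj), if_pos (by simpa using hi)] at hy
      simp only at hx hy
      exact le_of_lt (strip_lt_col hk T j (j + 1) (by omega) hj a hx b hy)
    · by_cases hjk : k ≤ j
      · rw [psiEntry, if_neg (by simp <;> omega)] at hx
        rw [psiEntry, if_neg (by simp <;> omega)] at hy
        have harith : j + 1 - (k - 1) = (j - (k - 1)) + 1 := by omega
        rw [harith] at hy
        exact T.row_le i (j - (k - 1)) (mem_col_of_row hk h1 (by simpa using hjk))
          (by have := mem_col_of_row hk h2 (by simp <;> omega)
              simpa [harith] using this) a hx b hy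
      · -- j + 1 = k : left cell is in the strip, right cell would be in ν: impossible
        exfalso
        have hjeq : j + 1 = k := by omega
        have hi : i = ν.colLen 0 := by
          rcases mem_rowCells_iff.mp h1 with ⟨m1, m2⟩ | ⟨m1, m2⟩
          · simp at m1; omega
          · exact m1
        rcases mem_rowCells_iff.mp h2 with ⟨m1, m2⟩ | ⟨m1, m2⟩
        · have := nu_row_lt m2
          simp at this
          omega
        · simp at m2; omega
  col_lt := by
    intro i j h1 h2 a hx b hy
    by_cases hj : j < k
    · exfalso
      have hi : i = ν.colLen 0 := by
        rcases mem_rowCells_iff.mp h1 with ⟨m1, m2⟩ | ⟨m1, m2⟩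
        · simp at m1; omega
        · exact m1
      rcases mem_rowCells_iff.mp h2 with ⟨m1, m2⟩ | ⟨m1, m2⟩
      · have := nu_row_lt m2
        simp at this m1
        omega
      · simp at m1; omega
    · rw [psiEntry, if_neg (by simpa using hj)] at hx
      rw [psiEntry, if_neg (by simpa using hj)] at hy
      exact T.col_lt i (j - (k - 1)) (mem_col_of_row hk h1 (by simp <;> omega))
        (mem_col_of_row hk h2 (by simp <;> omega)) a hx b hy

end Maps



section Transfer

variable {ν : YoungDiagram} {k n : ℕ}

lemma nuWordCol_phi (hk : 1 ≤ k) (T : SVT (starCells ν (rowShape k)))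
    (hdisj : ∀ a j₁ j₂, j₁ < j₂ → j₂ < k → a ∈ T.entry (ν.colLen 0, j₁) →
      a ∈ T.entry (ν.colLen 0, j₂) → False) :
    nuWordCol ν k (phiSVT hk T hdisj) = nuWordRow ν k T := by
  rw [nuWordCol, nuWordRow]
  refine flatMap_congr' fun j _ => flatMap_congr' fun i _ => ?_
  have heq : (phiSVT hk T hdisj).entry (i, j + 1) = T.entry (i, j + k) := by
    show phiEntry ν k T (i, j + 1) = _
    rw [phiEntry, if_neg (by simp)]
    have harith : j + 1 + (k - 1) = j + k := by omega
    rw [harith]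
  rw [heq]

lemma count_stripCol_phi (hk : 1 ≤ k) (T : SVT (starCells ν (rowShape k)))
    (hdisj : ∀ a j₁ j₂, j₁ < j₂ → j₂ < k → a ∈ T.entry (ν.colLen 0, j₁) →
      a ∈ T.entry (ν.colLen 0, j₂) → False) (a : ℕ) :
    (stripWordCol ν k (phiSVT hk T hdisj)).count a = (stripWordRow ν k T).count a := by
  rw [count_stripWordCol, count_stripWordRow]
  refine Finset.sum_congr rfl fun i _ => ?_
  have heq : (phiSVT hk T hdisj).entry (ν.colLen 0 + i, 0) = T.entry (ν.colLen 0, i) := by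
    show phiEntry ν k T (ν.colLen 0 + i, 0) = _
    rw [phiEntry, if_pos rfl, if_pos (by simp)]
    have harith : ν.colLen 0 + i - ν.colLen 0 = i := by omega
    rw [harith]
  rw [heq]

lemma nuWordRow_psi (hk : 1 ≤ k) (T : SVT (starCells ν (colShape k))) :
    nuWordRow ν k (psiSVT hk T) = nuWordCol ν k T := by
  rw [nuWordCol, nuWordRow]
  refine flatMap_congr' fun j _ => flatMap_congr' fun i _ => ?_
  have heq : (psiSVT hk T).entry (i, j + k) = T.entry (i, j + 1) := by
    show psiEntry ν k T (i, j + k) = _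
    rw [psiEntry, if_neg (by simp <;> omega)]
    have harith : j + k - (k - 1) = j + 1 := by omega
    rw [harith]
  rw [heq]

lemma count_stripRow_psi (hk : 1 ≤ k) (T : SVT (starCells ν (colShape k))) (a : ℕ) :
    (stripWordRow ν k (psiSVT hk T)).count a = (stripWordCol ν k T).count a := by
  rw [count_stripWordCol, count_stripWordRow]
  refine Finset.sum_congr rfl fun j hj => ?_
  have hjk : j < k := Finset.mem_range.mp hj
  have heq : (psiSVT hk T).entry (ν.colLen 0, j) = T.entry (ν.colLen 0 + j, 0) := by
    show psiEntry ν k T (ν.colLen 0, j) = _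
    rw [psiEntry, if_pos (by simpa using hjk), if_pos (by simp)]
  rw [heq]

lemma phi_mem (hk : 1 ≤ k) (T : SVT (starCells ν (rowShape k)))
    (hlat : IsLatticeWord T.word)
    (hcont : ∀ a, 1 ≤ a → T.word.count a = staircaseContent n a) :
    IsLatticeWord (phiSVT hk T (stripRow_disjoint (n := n) hk T hlat hcont)).word ∧
      ∀ a, 1 ≤ a →
        (phiSVT hk T (stripRow_disjoint (n := n) hk T hlat hcont)).word.count a =
          staircaseContent n a := by
  set hdisj := stripRow_disjoint (n := n) hk T hlat hcont
  set T' := phiSVT hk T hdisj with hT'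
  have hw' : T'.word = nuWordRow ν k T ++ stripWordCol ν k T' := by
    rw [word_col ν k hk T', hT', nuWordCol_phi]
  have hcnt : ∀ a, 1 ≤ a →
      (nuWordRow ν k T).count a + (stripWordCol ν k T').count a = n + 1 - a := by
    intro a ha
    rw [hT', count_stripCol_phi]
    have h := hcont a ha
    rw [word_row ν k hk T, List.count_append] at h
    exact h
  constructor
  · rw [hw']
    refine lattice_append_of (n := n) ?_ hcnt ?_
    · apply lattice_prefix (v := stripWordRow ν k T)
      rw [← word_row ν k hk T]
      exact hlat
    · intro a ha
      rw [hT', count_stripCol_phi]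
      exact stripRow_count_le_one (n := n) hk T hlat hcont a ha
  · intro a ha
    rw [hw', List.count_append, hcnt a ha]
    rfl

lemma psi_mem (hk : 1 ≤ k) (T : SVT (starCells ν (colShape k)))
    (hlat : IsLatticeWord T.word)
    (hcont : ∀ a, 1 ≤ a → T.word.count a = staircaseContent n a) :
    IsLatticeWord (psiSVT hk T).word ∧
      ∀ a, 1 ≤ a → (psiSVT hk T).word.count a = staircaseContent n a := by
  set T' := psiSVT hk T with hT'
  have hw' : T'.word = nuWordCol ν k T ++ stripWordRow ν k T' := by
    rw [word_row ν k hk T', hT', nuWordRow_psi]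
  have hcnt : ∀ a, 1 ≤ a →
      (nuWordCol ν k T).count a + (stripWordRow ν k T').count a = n + 1 - a := by
    intro a ha
    rw [hT', count_stripRow_psi]
    have h := hcont a ha
    rw [word_col ν k hk T, List.count_append] at h
    exact h
  constructor
  · rw [hw']
    refine lattice_append_of (n := n) ?_ hcnt ?_
    · apply lattice_prefix (v := stripWordCol ν k T)
      rw [← word_col ν k hk T]
      exact hlat
    · intro a _
      rw [hT', count_stripRow_psi]
      exact stripCol_count_le_one hk T a
  · intro a ha
    rw [hw', List.count_append, hcnt a ha]
    rfl

lemma psi_phi_entry (hk : 1 ≤ k) (T : SVT (starCells ν (rowShape k)))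
    (hdisj : ∀ a j₁ j₂, j₁ < j₂ → j₂ < k → a ∈ T.entry (ν.colLen 0, j₁) →
      a ∈ T.entry (ν.colLen 0, j₂) → False) (c : ℕ × ℕ) :
    (psiSVT hk (phiSVT hk T hdisj)).entry c = T.entry c := by
  obtain ⟨i, j⟩ := c
  show psiEntry ν k _ (i, j) = _
  rw [psiEntry]
  by_cases hj : j < k
  · rw [if_pos (by simpa using hj)]
    by_cases hi : i = ν.colLen 0
    · rw [if_pos (by simpa using hi)]
      show phiEntry ν k T (ν.colLen 0 + j, 0) = _
      rw [phiEntry, if_pos rfl, if_pos (by simp)]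
      subst hi
      have harith : ν.colLen 0 + j - ν.colLen 0 = j := by omega
      rw [harith]
    · rw [if_neg (by simpa using hi)]
      symm
      refine T.empty_off _ fun hmem => ?_
      rcases mem_rowCells_iff.mp hmem with ⟨m1, m2⟩ | ⟨m1, m2⟩
      · simp at m1; omega
      · simp at m1
        exact hi m1
  · rw [if_neg (by simpa using hj)]
    show phiEntry ν k T (i, j - (k - 1)) = _
    rw [phiEntry, if_neg (by simp <;> omega)]
    have harith : j - (k - 1) + (k - 1) = j := by omega
    rw [harith]

lemma phi_psi_entry (hk : 1 ≤ k) (T : SVT (starCells ν (colShape k)))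
    (hdisj : ∀ a j₁ j₂, j₁ < j₂ → j₂ < k →
      a ∈ (psiSVT hk T).entry (ν.colLen 0, j₁) →
      a ∈ (psiSVT hk T).entry (ν.colLen 0, j₂) → False) (c : ℕ × ℕ) :
    (phiSVT hk (psiSVT hk T) hdisj).entry c = T.entry c := by
  obtain ⟨i, j⟩ := c
  show phiEntry ν k _ (i, j) = _
  rw [phiEntry]
  by_cases hj : j = 0
  · subst hj
    rw [if_pos rfl]
    by_cases hi : ν.colLen 0 ≤ i
    · rw [if_pos hi]
      show psiEntry ν k T (ν.colLen 0, i - ν.colLen 0) = _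
      rw [psiEntry]
      by_cases hik : i - ν.colLen 0 < k
      · rw [if_pos (by simpa using hik), if_pos (by simp)]
        have harith : ν.colLen 0 + (i - ν.colLen 0) = i := by omega
        rw [harith]
      · rw [if_neg (by simpa using hik)]
        have h1 : T.entry (ν.colLen 0, i - ν.colLen 0 - (k - 1)) = ∅ := by
          refine T.empty_off _ fun hmem => ?_
          rcases (mem_colCells_iff hk).mp hmem with ⟨m1, m2⟩ | ⟨m1, m2, m3⟩
          · exact absurd (nu_row_lt m2) (by simp)
          · simp at m3; omega
        have h2 : T.entry (i, 0) = ∅ := by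
          refine T.empty_off _ fun hmem => ?_
          rcases (mem_colCells_iff hk).mp hmem with ⟨m1, m2⟩ | ⟨m1, m2, m3⟩
          · simp at m1
          · simp at m2; omega
        rw [h1, h2]
    · rw [if_neg hi]
      symm
      refine T.empty_off _ fun hmem => ?_
      rcases (mem_colCells_iff hk).mp hmem with ⟨m1, m2⟩ | ⟨m1, m2, m3⟩
      · simp at m1
      · simp at m1; omega
  · rw [if_neg (by simpa using hj)]
    show psiEntry ν k T (i, j + (k - 1)) = _
    rw [psiEntry, if_neg (by simp <;> omega)]
    have harith : j + (k - 1) - (k - 1) = j := by omega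
    rw [harith]

/-- The equivalence between lattice set-valued tableaux of shapes `ν∗(k)` and `ν∗(1^k)`
with content `ρ_n`. -/
def theEquiv (hk : 1 ≤ k) :
    {T : SVT (starCells ν (rowShape k)) // IsLatticeWord T.word ∧
      ∀ a, 1 ≤ a → T.word.count a = staircaseContent n a} ≃
    {T : SVT (starCells ν (colShape k)) // IsLatticeWord T.word ∧
      ∀ a, 1 ≤ a → T.word.count a = staircaseContent n a} where
  toFun T := ⟨phiSVT hk T.1 (stripRow_disjoint (n := n) hk T.1 T.2.1 T.2.2),
    phi_mem hk T.1 T.2.1 T.2.2⟩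
  invFun T := ⟨psiSVT hk T.1, psi_mem hk T.1 T.2.1 T.2.2⟩
  left_inv T := Subtype.ext (SVT.ext' (funext fun c =>
    psi_phi_entry hk T.1 (stripRow_disjoint (n := n) hk T.1 T.2.1 T.2.2) c))
  right_inv T := Subtype.ext (SVT.ext' (funext fun c =>
    phi_psi_entry hk T.1
      (stripRow_disjoint (n := n) hk (psiSVT hk T.1) (psi_mem hk T.1 T.2.1 T.2.2).1
        (psi_mem hk T.1 T.2.1 T.2.2).2) c))

end Transfer


end Aux

/-- `c^{ρ_n}_{(k)ν} = c^{ρ_n}_{(1^k)ν}` for `1 ≤ k ≤ n`: the number of set-valued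
tableaux of shape `ν∗(k)` whose reverse reading word is a lattice word with content
`ρ_n = (n, n-1, …, 1)` equals the number of set-valued tableaux of shape `ν∗(1^k)` whose
reverse reading word is a lattice word with content `ρ_n`. -/
theorem littlewood_richardson_row_col (ν : YoungDiagram) (k n : ℕ) (hk : 1 ≤ k)
    (hkn : k ≤ n) :
    latticeCount (starCells ν (rowShape k)) (staircaseContent n) =
      latticeCount (starCells ν (colShape k)) (staircaseContent n) := by
  exact Nat.card_congr (theEquiv (ν := ν) (k := k) (n := n) hk)

end Stembridge
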